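/- Let Δ ⊆ ℝ⁴ be a reflexive polytope and let w₁, w₂, w₃, w₄, w₅ ∈ Δ ∩ ℤ⁴ satisfy w₁ + w₂ = w₃ + w₄. Assume {w₁, w₂, w₃, w₅} is ℝ-linearly independent, and that Cone(w₁,w₂,w₃,w₅) ∩ Δ ∩ ℤ⁴ = {0, w₁, w₂, w₃, w₅} and Cone(w₁,w₂,w₄,w₅) ∩ Δ ∩ ℤ⁴ = {0, w₁, w₂, w₄, w₅}. If both w₁+w₂+w₃+w₅ and w₁+w₂+w₄+w₅ lie in 3·∂Δ ∪ 4·∂Δ, then both w₁+w₃+w₄+w₅ and w₂+w₃+w₄+w₅ lie in 3·∂Δ ∪ 4·∂Δ. (This is the combinatorial content of the wall-crossing proposition in the case where the circuit J₋ ∪ J₊ has four elements: if one of two Δ-maximal fans related by such a wall crossing has good maximal cones, then so does the other.) -/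

import Mathlib

open Pointwise

/-- The standard pairing `⟨m,n⟩ = ∑ i, mᵢ nᵢ` on `ℝ^d`. -/
def pairing {d : ℕ} (m n : Fin d → ℝ) : ℝ := ∑ i, m i * n i

/-- A point of `ℝ^d` is a lattice point if all coordinates are integers. -/
def IsLatticePt {d : ℕ} (v : Fin d → ℝ) : Prop := ∀ i, ∃ n : ℤ, v i = (n : ℝ)

/-- The set of lattice points of `ℝ^d`. -/
def latticePts (d : ℕ) : Set (Fin d → ℝ) := {v | IsLatticePt v}

/-- A lattice polytope is the convex hull of finitely many lattice points. -/
def IsLatticePolytope {d : ℕ} (Δ : Set (Fin d → ℝ)) : Prop :=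
  ∃ S : Finset (Fin d → ℝ), (S : Set (Fin d → ℝ)) ⊆ latticePts d ∧
    Δ = convexHull ℝ (S : Set (Fin d → ℝ))

/-- The dual polytope `Δ* = {m : ⟨m,n⟩ ≥ -1 for all n ∈ Δ}`. -/
def dualPolytope {d : ℕ} (Δ : Set (Fin d → ℝ)) : Set (Fin d → ℝ) :=
  {m | ∀ n ∈ Δ, -1 ≤ pairing m n}

/-- A reflexive polytope: a lattice polytope with `0` in its interior
whose dual polytope is again a lattice polytope. -/
def IsReflexive {d : ℕ} (Δ : Set (Fin d → ℝ)) : Prop :=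
  IsLatticePolytope Δ ∧ (0 : Fin d → ℝ) ∈ interior Δ ∧ IsLatticePolytope (dualPolytope Δ)

/-- `Cone(v₁,…,v_k) = {r₁v₁ + ⋯ + r_kv_k : rᵢ ≥ 0}`. -/
def coneOf {d k : ℕ} (v : Fin k → (Fin d → ℝ)) : Set (Fin d → ℝ) :=
  {x | ∃ r : Fin k → ℝ, (∀ i, 0 ≤ r i) ∧ x = ∑ i, r i • v i}

/-- `r·∂Δ`, the frontier (topological boundary) of the dilate `rΔ`. -/
def bdry {d : ℕ} (r : ℝ) (Δ : Set (Fin d → ℝ)) : Set (Fin d → ℝ) := frontier (r • Δ)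

/-- The points of `S` lie in a common proper face of `Δ`: there is `u` with
`⟨u,x⟩ ≤ 1` on `Δ` and `⟨u,v⟩ = 1` for all `v ∈ S`. -/
def InCommonFace {d : ℕ} (Δ : Set (Fin d → ℝ)) (S : Set (Fin d → ℝ)) : Prop :=
  ∃ u : Fin d → ℝ, (∀ x ∈ Δ, pairing u x ≤ 1) ∧ ∀ v ∈ S, pairing u v = 1

/-- Coordinatewise cast of an integer vector to a real vector. -/
def toRealVec {d : ℕ} (n : Fin d → ℤ) : Fin d → ℝ := fun i => (n i : ℝ)

namespace WallCrossAux

/-- `pairing m ·` as a linear map. -/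
def pairingL {d : ℕ} (m : Fin d → ℝ) : (Fin d → ℝ) →ₗ[ℝ] ℝ where
  toFun x := pairing m x
  map_add' x y := by
    simp only [pairing, Pi.add_apply]
    rw [← Finset.sum_add_distrib]
    exact Finset.sum_congr rfl fun i _ => by ring
  map_smul' c x := by
    simp only [pairing, Pi.smul_apply, smul_eq_mul, RingHom.id_apply]
    rw [Finset.mul_sum]
    exact Finset.sum_congr rfl fun i _ => by ring

lemma pairing_eq {d : ℕ} (m x : Fin d → ℝ) : pairing m x = pairingL m x := rfl

lemma pairing_comm {d : ℕ} (m x : Fin d → ℝ) : pairing m x = pairing x m := by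
  simp [pairing, mul_comm]

lemma pairing_add_right {d : ℕ} (m x y : Fin d → ℝ) :
    pairing m (x + y) = pairing m x + pairing m y := map_add (pairingL m) x y

lemma pairing_sub_right {d : ℕ} (m x y : Fin d → ℝ) :
    pairing m (x - y) = pairing m x - pairing m y := map_sub (pairingL m) x y

lemma pairing_smul_right {d : ℕ} (m : Fin d → ℝ) (c : ℝ) (x : Fin d → ℝ) :
    pairing m (c • x) = c * pairing m x := map_smul (pairingL m) c x

lemma pairing_comb {d : ℕ} (m : Fin d → ℝ) (a b c e : ℝ) (x y z w : Fin d → ℝ) :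
    pairing m (a•x + b•y + c•z + e•w)
      = a * pairing m x + b * pairing m y + c * pairing m z + e * pairing m w := by
  simp [pairing_add_right, pairing_smul_right]

lemma pairing_finsum {d : ℕ} (m : Fin d → ℝ) (S : Finset (Fin d → ℝ)) (f : (Fin d → ℝ) → ℝ) :
    pairing m (∑ y ∈ S, f y • y) = ∑ y ∈ S, f y * pairing m y := by
  rw [pairing_eq, map_sum]
  exact Finset.sum_congr rfl fun y _ => by rw [map_smul, smul_eq_mul, ← pairing_eq]

lemma pairing_continuous {d : ℕ} (m : Fin d → ℝ) : Continuous (fun x : Fin d → ℝ => pairing m x) := by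
  unfold pairing
  exact continuous_finset_sum _ fun i _ => continuous_const.mul (continuous_apply i)

lemma lat_add {d : ℕ} {x y : Fin d → ℝ} (hx : IsLatticePt x) (hy : IsLatticePt y) :
    IsLatticePt (x + y) := by
  intro i
  obtain ⟨a, ha⟩ := hx i
  obtain ⟨b, hb⟩ := hy i
  exact ⟨a + b, by simp [Pi.add_apply, ha, hb]⟩

lemma pairing_int {d : ℕ} {m x : Fin d → ℝ} (hm : IsLatticePt m) (hx : IsLatticePt x) :
    ∃ z : ℤ, pairing m x = (z : ℝ) := by
  choose a ha using hm
  choose b hb using hx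
  refine ⟨∑ i, a i * b i, ?_⟩
  rw [pairing]
  push_cast
  exact Finset.sum_congr rfl fun i _ => by rw [ha i, hb i]

/-- Dual description of a reflexive polytope by the finitely many lattice
functionals generating its dual. -/
lemma dual_desc (Δ : Set (Fin 4 → ℝ)) (hΔ : IsReflexive Δ) :
    ∃ Sd : Finset (Fin 4 → ℝ), (↑Sd : Set (Fin 4 → ℝ)) ⊆ latticePts 4 ∧
      ∀ x, x ∈ Δ ↔ ∀ m ∈ Sd, -1 ≤ pairing m x := by
  obtain ⟨⟨S, hSlat, hSΔ⟩, h0, ⟨Sd, hSdlat, hSdΔ⟩⟩ := hΔ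
  refine ⟨Sd, hSdlat, fun x => ⟨fun hx m hm => ?_, fun hx => ?_⟩⟩
  · have hmem : m ∈ dualPolytope Δ := by
      rw [hSdΔ]; exact subset_convexHull ℝ _ hm
    exact hmem x hx
  · by_contra hxΔ
    have hconv : Convex ℝ Δ := hSΔ ▸ convex_convexHull ℝ _
    have hclosed : IsClosed Δ := hSΔ ▸ (S.finite_toSet.isCompact_convexHull ℝ).isClosed
    obtain ⟨f, u, hfu, hux⟩ := geometric_hahn_banach_closed_point hconv hclosed hxΔ
    have h0Δ : (0 : Fin 4 → ℝ) ∈ Δ := interior_subset h0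
    have hu : 0 < u := by simpa using hfu 0 h0Δ
    set δ : Fin 4 → (Fin 4 → ℝ) := fun i => fun j => if i = j then 1 else 0 with hδ
    set m : Fin 4 → ℝ := fun i => -(1/u) * f (δ i) with hmdef
    have key : ∀ y : Fin 4 → ℝ, pairing m y = -(1/u) * f y := by
      intro y
      have hfy : f y = ∑ i, y i * f (δ i) := by
        conv_lhs => rw [pi_eq_sum_univ y]
        rw [map_sum]
        exact Finset.sum_congr rfl fun i _ => by rw [map_smul, smul_eq_mul]
      rw [hfy, pairing, Finset.mul_sum]
      exact Finset.sum_congr rfl fun i _ => by rw [hmdef]; ring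
    have hmdual : m ∈ dualPolytope Δ := by
      intro n hn
      rw [key n]
      have h1 : f n / u < 1 := (div_lt_one hu).mpr (hfu n hn)
      have : -(1/u) * f n = -(f n / u) := by ring
      rw [this]; linarith
    -- m is in the convex hull of Sd, and x satisfies all constraints from Sd
    have hC : m ∈ {z : Fin 4 → ℝ | -1 ≤ pairing x z} := by
      have hsub : (↑Sd : Set (Fin 4 → ℝ)) ⊆ {z | -1 ≤ pairing x z} := by
        intro z hz
        simp only [Set.mem_setOf_eq, pairing_comm x z]
        exact hx z hz
      have hcv : Convex ℝ {z : Fin 4 → ℝ | -1 ≤ pairing x z} := by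
        have : {z : Fin 4 → ℝ | -1 ≤ pairing x z} = {z | -1 ≤ pairingL x z} := rfl
        rw [this]
        exact convex_halfSpace_ge (LinearMap.isLinear (pairingL x)) (-1)
      have : dualPolytope Δ ⊆ {z | -1 ≤ pairing x z} := by
        rw [hSdΔ]; exact convexHull_min hsub hcv
      exact this hmdual
    have hlt : pairing x m < -1 := by
      rw [pairing_comm, key x]
      have h1 : 1 < f x / u := (one_lt_div hu).mpr hux
      have : -(1/u) * f x = -(f x / u) := by ring
      rw [this]; linarith
    exact absurd hC (by simpa using not_le.mpr hlt)

lemma smul_mem_iff (Δ : Set (Fin 4 → ℝ)) (Sd : Finset (Fin 4 → ℝ))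
    (hdesc : ∀ x, x ∈ Δ ↔ ∀ m ∈ Sd, -1 ≤ pairing m x) {r : ℝ} (hr : 0 < r) (x : Fin 4 → ℝ) :
    x ∈ r • Δ ↔ ∀ m ∈ Sd, -r ≤ pairing m x := by
  rw [Set.mem_smul_set_iff_inv_smul_mem₀ (ne_of_gt hr), hdesc]
  have hrr : r * r⁻¹ = 1 := mul_inv_cancel₀ (ne_of_gt hr)
  constructor
  · intro h m hm
    have := h m hm
    rw [pairing_smul_right] at this
    nlinarith [this]
  · intro h m hm
    rw [pairing_smul_right]
    have := h m hm
    have h2 : 0 < r⁻¹ := inv_pos.mpr hr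
    nlinarith [this]

lemma frontier_desc (Δ : Set (Fin 4 → ℝ)) (Sd : Finset (Fin 4 → ℝ))
    (hdesc : ∀ x, x ∈ Δ ↔ ∀ m ∈ Sd, -1 ≤ pairing m x) {r : ℝ} (hr : 0 < r) (x : Fin 4 → ℝ) :
    x ∈ frontier (r • Δ) ↔
      (∀ m ∈ Sd, -r ≤ pairing m x) ∧ ∃ m ∈ Sd, pairing m x = -r := by
  have hset : r • Δ = {y : Fin 4 → ℝ | ∀ m ∈ Sd, -r ≤ pairing m y} :=
    Set.ext (smul_mem_iff Δ Sd hdesc hr)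
  have hsetI : {y : Fin 4 → ℝ | ∀ m ∈ Sd, -r ≤ pairing m y}
      = ⋂ m ∈ Sd, {y | -r ≤ pairing m y} := by
    ext y; simp
  have hclosed : IsClosed (r • Δ) := by
    rw [hset, hsetI]
    exact isClosed_biInter fun m _ => isClosed_le continuous_const (pairing_continuous m)
  have hUopen : IsOpen (⋂ m ∈ Sd, {y : Fin 4 → ℝ | -r < pairing m y}) :=
    isOpen_biInter_finset fun m _ => isOpen_lt continuous_const (pairing_continuous m)
  have hUsub : (⋂ m ∈ Sd, {y : Fin 4 → ℝ | -r < pairing m y}) ⊆ r • Δ := by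
    intro y hy
    rw [hset]
    intro m hm
    have : y ∈ {y : Fin 4 → ℝ | -r < pairing m y} := by
      simp only [Set.mem_iInter] at hy
      exact hy m hm
    exact le_of_lt this
  have hint : interior (r • Δ) = ⋂ m ∈ Sd, {y : Fin 4 → ℝ | -r < pairing m y} := by
    apply subset_antisymm
    · intro y hy
      simp only [Set.mem_iInter]
      intro m hm
      by_contra hle
      rw [Set.mem_setOf_eq, not_lt] at hle
      obtain ⟨ε, hε, hball⟩ := Metric.mem_nhds_iff.mp (mem_interior_iff_mem_nhds.mp hy)
      have hmm0 : 0 < pairing m m := by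
        have hnn : 0 ≤ pairing m m := Finset.sum_nonneg fun i _ => mul_self_nonneg _
        rcases hnn.eq_or_lt with h0 | h; swap
        · exact h
        exfalso
        have hall : ∀ i, m i = 0 := by
          intro i
          have := (Finset.sum_eq_zero_iff_of_nonneg
            (fun i (_ : i ∈ Finset.univ) => mul_self_nonneg (m i))).mp h0.symm i (Finset.mem_univ i)
          exact mul_self_eq_zero.mp this
        have : pairing m y = 0 := by
          rw [pairing]
          exact Finset.sum_eq_zero fun i _ => by rw [hall i]; ring
        rw [this] at hle
        linarith
      have hnorm : (0:ℝ) ≤ ‖m‖ := norm_nonneg m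
      set t : ℝ := ε / (‖m‖ + 1) with ht
      have htpos : 0 < t := div_pos hε (by linarith)
      have hmem' : y - t • m ∈ r • Δ := by
        apply hball
        rw [Metric.mem_ball, dist_eq_norm]
        have : y - t • m - y = -(t • m) := by abel
        rw [this, norm_neg, norm_smul, Real.norm_eq_abs, abs_of_pos htpos]
        calc t * ‖m‖ < t * (‖m‖ + 1) := by nlinarith
          _ = ε / (‖m‖ + 1) * (‖m‖ + 1) := rfl
          _ = ε := div_mul_cancel₀ ε (by linarith)
      have hge := (smul_mem_iff Δ Sd hdesc hr _).mp hmem' m hm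
      have : pairing m (y - t • m) = pairing m y - t * pairing m m := by
        rw [pairing_sub_right, pairing_smul_right]
      rw [this] at hge
      nlinarith [mul_pos htpos hmm0]
    · exact interior_maximal hUsub hUopen
  rw [frontier, hclosed.closure_eq, hint]
  constructor
  · rintro ⟨hmem, hni⟩
    have h1 : ∀ m ∈ Sd, -r ≤ pairing m x := by rwa [← smul_mem_iff Δ Sd hdesc hr]
    refine ⟨h1, ?_⟩
    simp only [Set.mem_iInter, Set.mem_setOf_eq, not_forall] at hni
    obtain ⟨m, hm, hnlt⟩ := hni
    push_neg at hnlt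
    exact ⟨m, hm, le_antisymm hnlt (h1 m hm)⟩
  · rintro ⟨h1, m, hm, heq⟩
    refine ⟨(smul_mem_iff Δ Sd hdesc hr x).mpr h1, ?_⟩
    simp only [Set.mem_iInter, Set.mem_setOf_eq, not_forall]
    exact ⟨m, hm, by rw [heq]; simp⟩

end WallCrossAux

namespace WallCrossAux

/-- The core combinatorial lemma: in the main case, the sum of generators of the
new cone lies at level `≤ -3`. -/
lemma core'
    (Sd : Finset (Fin 4 → ℝ)) (hSdlat : (↑Sd : Set (Fin 4 → ℝ)) ⊆ latticePts 4)
    (S : Finset (Fin 4 → ℝ)) (hSlat : (↑S : Set (Fin 4 → ℝ)) ⊆ latticePts 4)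
    (v₁ v₂ v₃ v₅ : Fin 4 → ℝ)
    (hl1 : IsLatticePt v₁) (hl2 : IsLatticePt v₂) (hl3 : IsLatticePt v₃) (hl5 : IsLatticePt v₅)
    (hl4 : IsLatticePt (v₁ + v₂ - v₃))
    (hli : LinearIndependent ℝ ![v₁, v₂, v₃, v₅])
    (hm1 : ∀ m ∈ Sd, -1 ≤ pairing m v₁) (hm2 : ∀ m ∈ Sd, -1 ≤ pairing m v₂)
    (hm3 : ∀ m ∈ Sd, -1 ≤ pairing m v₃) (hm4 : ∀ m ∈ Sd, -1 ≤ pairing m (v₁ + v₂ - v₃))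
    (hm5 : ∀ m ∈ Sd, -1 ≤ pairing m v₅)
    (hS : ∀ y ∈ S, ∀ m ∈ Sd, -1 ≤ pairing m y)
    (hhull : ∀ x : Fin 4 → ℝ, (∀ m ∈ Sd, -1 ≤ pairing m x) →
      x ∈ convexHull ℝ (↑S : Set (Fin 4 → ℝ)))
    (hcone : ∀ x : Fin 4 → ℝ, IsLatticePt x → (∀ m ∈ Sd, -1 ≤ pairing m x) →
      ∀ r : Fin 4 → ℝ, (∀ i, 0 ≤ r i) → x = r 0 • v₁ + r 1 • v₂ + r 2 • v₃ + r 3 • v₅ →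
      (x = 0 ∨ x = v₁ ∨ x = v₂ ∨ x = v₃ ∨ x = v₅))
    (hs3e : ∃ m ∈ Sd, pairing m (v₁ + v₂ + v₃ + v₅) = -3)
    (ht3e : ∃ m ∈ Sd, pairing m (v₁ + v₂ + (v₁ + v₂ - v₃) + v₅) = -3) :
    ∃ m ∈ Sd, pairing m (v₁ + v₃ + (v₁ + v₂ - v₃) + v₅) ≤ -3 := by
  classical
  by_contra hcon
  push_neg at hcon
  have zint : ∀ m ∈ Sd, ∀ x : Fin 4 → ℝ, IsLatticePt x → ∃ z : ℤ, pairing m x = (z:ℝ) :=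
    fun m hm x hx => pairing_int (hSdlat hm) hx
  have hlatP : IsLatticePt (v₁ + v₃ + (v₁ + v₂ - v₃) + v₅) :=
    lat_add (lat_add (lat_add hl1 hl3) hl4) hl5
  -- expansions
  have eP : ∀ m : Fin 4 → ℝ, pairing m (v₁ + v₃ + (v₁ + v₂ - v₃) + v₅)
      = 2*pairing m v₁ + pairing m v₂ + pairing m v₅ := by
    intro m; simp only [pairing_add_right, pairing_sub_right]; ring
  have e4 : ∀ m : Fin 4 → ℝ, pairing m (v₁ + v₂ - v₃)
      = pairing m v₁ + pairing m v₂ - pairing m v₃ := by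
    intro m; simp only [pairing_add_right, pairing_sub_right]
  have eS : ∀ m : Fin 4 → ℝ, pairing m (v₁ + v₂ + v₃ + v₅)
      = pairing m v₁ + pairing m v₂ + pairing m v₃ + pairing m v₅ := by
    intro m; simp only [pairing_add_right]
  have eT : ∀ m : Fin 4 → ℝ, pairing m (v₁ + v₂ + (v₁ + v₂ - v₃) + v₅)
      = 2*pairing m v₁ + 2*pairing m v₂ - pairing m v₃ + pairing m v₅ := by
    intro m; simp only [pairing_add_right, pairing_sub_right]; ring
  have e12 : ∀ m : Fin 4 → ℝ, pairing m (v₁ + v₂) = pairing m v₁ + pairing m v₂ :=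
    fun m => pairing_add_right m v₁ v₂
  have e15 : ∀ m : Fin 4 → ℝ, pairing m (v₁ + v₅) = pairing m v₁ + pairing m v₅ :=
    fun m => pairing_add_right m v₁ v₅
  have H : ∀ m ∈ Sd, -2 ≤ pairing m (v₁ + v₃ + (v₁ + v₂ - v₃) + v₅) := by
    intro m hm
    obtain ⟨z, hz⟩ := zint m hm _ hlatP
    have h1 : (-3:ℝ) < (z:ℝ) := hz ▸ hcon m hm
    have h2 : (-3:ℤ) < z := by exact_mod_cast h1
    rw [hz]
    exact_mod_cast (by omega : (-2:ℤ) ≤ z)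
  -- linear independence in explicit form
  have hli4 : ∀ c0 c1 c2 c3 : ℝ, c0•v₁ + c1•v₂ + c2•v₃ + c3•v₅ = 0 →
      c0 = 0 ∧ c1 = 0 ∧ c2 = 0 ∧ c3 = 0 := by
    intro c0 c1 c2 c3 h
    have h4 := Fintype.linearIndependent_iff.mp hli ![c0,c1,c2,c3]
      (by rw [Fin.sum_univ_four]; exact h)
    exact ⟨h4 0, h4 1, h4 2, h4 3⟩
  -- the functional attaining -3 on v₁+v₂+v₃+v₅
  obtain ⟨ma, hmaS, hmae⟩ := hs3e
  obtain ⟨a1, ha1⟩ := zint ma hmaS v₁ hl1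
  obtain ⟨a2, ha2⟩ := zint ma hmaS v₂ hl2
  obtain ⟨a3, ha3⟩ := zint ma hmaS v₃ hl3
  obtain ⟨a5, ha5⟩ := zint ma hmaS v₅ hl5
  have hA : a1 = 0 ∧ a2 = -1 ∧ a3 = -1 ∧ a5 = -1 := by
    have h1 : (a1:ℝ) + a2 + a3 + a5 = -3 := by
      rw [← ha1, ← ha2, ← ha3, ← ha5, ← eS ma]; exact hmae
    have h2 := hm1 ma hmaS; rw [ha1] at h2
    have h3 := hm2 ma hmaS; rw [ha2] at h3
    have h4 := hm3 ma hmaS; rw [ha3] at h4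
    have h5 := hm5 ma hmaS; rw [ha5] at h5
    have h6 := hm4 ma hmaS; rw [e4 ma, ha1, ha2, ha3] at h6
    have h7 := H ma hmaS; rw [eP ma, ha1, ha2, ha5] at h7
    have i1 : a1 + a2 + a3 + a5 = -3 := by exact_mod_cast h1
    have i2 : (-1:ℤ) ≤ a1 := by exact_mod_cast h2
    have i3 : (-1:ℤ) ≤ a2 := by exact_mod_cast h3
    have i4 : (-1:ℤ) ≤ a3 := by exact_mod_cast h4
    have i5 : (-1:ℤ) ≤ a5 := by exact_mod_cast h5
    have i6 : (-1:ℤ) ≤ a1 + a2 - a3 := by exact_mod_cast h6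
    have i7 : (-2:ℤ) ≤ 2*a1 + a2 + a5 := by exact_mod_cast h7
    omega
  have pa1 : pairing ma v₁ = 0 := by rw [ha1, hA.1]; norm_num
  have pa2 : pairing ma v₂ = -1 := by rw [ha2, hA.2.1]; norm_num
  have pa3 : pairing ma v₃ = -1 := by rw [ha3, hA.2.2.1]; norm_num
  have pa5 : pairing ma v₅ = -1 := by rw [ha5, hA.2.2.2]; norm_num
  -- the functional attaining -3 on v₁+v₂+v₄+v₅
  obtain ⟨mb, hmbS, hmbe⟩ := ht3e
  obtain ⟨b1, hb1⟩ := zint mb hmbS v₁ hl1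
  obtain ⟨b2, hb2⟩ := zint mb hmbS v₂ hl2
  obtain ⟨b3, hb3⟩ := zint mb hmbS v₃ hl3
  obtain ⟨b5, hb5⟩ := zint mb hmbS v₅ hl5
  have hB : b1 = 0 ∧ b2 = -1 ∧ b3 = 0 ∧ b5 = -1 := by
    have h1 : 2*(b1:ℝ) + 2*b2 - b3 + b5 = -3 := by
      rw [← hb1, ← hb2, ← hb3, ← hb5, ← eT mb]; exact hmbe
    have h2 := hm1 mb hmbS; rw [hb1] at h2
    have h3 := hm2 mb hmbS; rw [hb2] at h3
    have h4 := hm3 mb hmbS; rw [hb3] at h4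
    have h5 := hm5 mb hmbS; rw [hb5] at h5
    have h6 := hm4 mb hmbS; rw [e4 mb, hb1, hb2, hb3] at h6
    have h7 := H mb hmbS; rw [eP mb, hb1, hb2, hb5] at h7
    have i1 : 2*b1 + 2*b2 - b3 + b5 = -3 := by exact_mod_cast h1
    have i2 : (-1:ℤ) ≤ b1 := by exact_mod_cast h2
    have i3 : (-1:ℤ) ≤ b2 := by exact_mod_cast h3
    have i4 : (-1:ℤ) ≤ b3 := by exact_mod_cast h4
    have i5 : (-1:ℤ) ≤ b5 := by exact_mod_cast h5
    have i6 : (-1:ℤ) ≤ b1 + b2 - b3 := by exact_mod_cast h6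
    have i7 : (-2:ℤ) ≤ 2*b1 + b2 + b5 := by exact_mod_cast h7
    omega
  have pb1 : pairing mb v₁ = 0 := by rw [hb1, hB.1]; norm_num
  have pb2 : pairing mb v₂ = -1 := by rw [hb2, hB.2.1]; norm_num
  have pb3 : pairing mb v₃ = 0 := by rw [hb3, hB.2.2.1]; norm_num
  have pb5 : pairing mb v₅ = -1 := by rw [hb5, hB.2.2.2]; norm_num
  -- witness excluding v₁+v₂ from Δ
  have h12 : ¬ ∀ m ∈ Sd, -1 ≤ pairing m (v₁ + v₂) := by
    intro hall
    have h5 := hcone (v₁+v₂) (lat_add hl1 hl2) hall ![1,1,0,0]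
      (by intro i; fin_cases i <;> norm_num)
      (by show v₁ + v₂ = (1:ℝ)•v₁ + (1:ℝ)•v₂ + (0:ℝ)•v₃ + (0:ℝ)•v₅; module)
    rcases h5 with h|h|h|h|h
    · exact one_ne_zero (hli4 1 1 0 0 (by linear_combination (norm := module) h)).1
    · exact one_ne_zero (hli4 0 1 0 0 (by linear_combination (norm := module) h)).2.1
    · exact one_ne_zero (hli4 1 0 0 0 (by linear_combination (norm := module) h)).1
    · exact one_ne_zero (hli4 1 1 (-1) 0 (by linear_combination (norm := module) h)).1
    · exact one_ne_zero (hli4 1 1 0 (-1) (by linear_combination (norm := module) h)).1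
  push_neg at h12
  obtain ⟨ms, hmsS, hmslt⟩ := h12
  obtain ⟨c1, hc1⟩ := zint ms hmsS v₁ hl1
  obtain ⟨c2, hc2⟩ := zint ms hmsS v₂ hl2
  obtain ⟨c3, hc3⟩ := zint ms hmsS v₃ hl3
  obtain ⟨c5, hc5⟩ := zint ms hmsS v₅ hl5
  have hC : c1 = -1 ∧ c2 = -1 ∧ c3 = -1 ∧ 1 ≤ c5 := by
    have h1 : (c1:ℝ) + c2 < -1 := by rw [← hc1, ← hc2, ← e12 ms]; exact hmslt
    have h2 := hm1 ms hmsS; rw [hc1] at h2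
    have h3 := hm2 ms hmsS; rw [hc2] at h3
    have h4 := hm3 ms hmsS; rw [hc3] at h4
    have h6 := hm4 ms hmsS; rw [e4 ms, hc1, hc2, hc3] at h6
    have h7 := H ms hmsS; rw [eP ms, hc1, hc2, hc5] at h7
    have i1 : c1 + c2 < -1 := by exact_mod_cast h1
    have i2 : (-1:ℤ) ≤ c1 := by exact_mod_cast h2
    have i3 : (-1:ℤ) ≤ c2 := by exact_mod_cast h3
    have i4 : (-1:ℤ) ≤ c3 := by exact_mod_cast h4
    have i6 : (-1:ℤ) ≤ c1 + c2 - c3 := by exact_mod_cast h6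
    have i7 : (-2:ℤ) ≤ 2*c1 + c2 + c5 := by exact_mod_cast h7
    omega
  have pc1 : pairing ms v₁ = -1 := by rw [hc1, hC.1]; norm_num
  have pc2 : pairing ms v₂ = -1 := by rw [hc2, hC.2.1]; norm_num
  have pc3 : pairing ms v₃ = -1 := by rw [hc3, hC.2.2.1]; norm_num
  have pc5 : (1:ℝ) ≤ pairing ms v₅ := by rw [hc5]; exact_mod_cast hC.2.2.2
  -- witness excluding v₁+v₅ from Δ
  have h15 : ¬ ∀ m ∈ Sd, -1 ≤ pairing m (v₁ + v₅) := by
    intro hall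
    have h5 := hcone (v₁+v₅) (lat_add hl1 hl5) hall ![1,0,0,1]
      (by intro i; fin_cases i <;> norm_num)
      (by show v₁ + v₅ = (1:ℝ)•v₁ + (0:ℝ)•v₂ + (0:ℝ)•v₃ + (1:ℝ)•v₅; module)
    rcases h5 with h|h|h|h|h
    · exact one_ne_zero (hli4 1 0 0 1 (by linear_combination (norm := module) h)).1
    · exact one_ne_zero (hli4 0 0 0 1 (by linear_combination (norm := module) h)).2.2.2
    · exact one_ne_zero (hli4 1 (-1) 0 1 (by linear_combination (norm := module) h)).1
    · exact one_ne_zero (hli4 1 0 (-1) 1 (by linear_combination (norm := module) h)).1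
    · exact one_ne_zero (hli4 1 0 0 0 (by linear_combination (norm := module) h)).1
  push_neg at h15
  obtain ⟨mp, hmpS, hmplt⟩ := h15
  obtain ⟨d1, hd1⟩ := zint mp hmpS v₁ hl1
  obtain ⟨d2, hd2⟩ := zint mp hmpS v₂ hl2
  obtain ⟨d5, hd5⟩ := zint mp hmpS v₅ hl5
  have hD : d1 = -1 ∧ d5 = -1 ∧ 1 ≤ d2 := by
    have h1 : (d1:ℝ) + d5 < -1 := by rw [← hd1, ← hd5, ← e15 mp]; exact hmplt
    have h2 := hm1 mp hmpS; rw [hd1] at h2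
    have h3 := hm2 mp hmpS; rw [hd2] at h3
    have h5 := hm5 mp hmpS; rw [hd5] at h5
    have h7 := H mp hmpS; rw [eP mp, hd1, hd2, hd5] at h7
    have i1 : d1 + d5 < -1 := by exact_mod_cast h1
    have i2 : (-1:ℤ) ≤ d1 := by exact_mod_cast h2
    have i3 : (-1:ℤ) ≤ d2 := by exact_mod_cast h3
    have i5 : (-1:ℤ) ≤ d5 := by exact_mod_cast h5
    have i7 : (-2:ℤ) ≤ 2*d1 + d2 + d5 := by exact_mod_cast h7
    omega
  have pd1 : pairing mp v₁ = -1 := by rw [hd1, hD.1]; norm_num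
  have pd5 : pairing mp v₅ = -1 := by rw [hd5, hD.2.1]; norm_num
  have pd2 : (1:ℝ) ≤ pairing mp v₂ := by rw [hd2]; exact_mod_cast hD.2.2
  -- the half point of P lies in Δ = conv S
  have hx₀mem : ∀ m ∈ Sd, -1 ≤ pairing m ((2⁻¹:ℝ) • (v₁ + v₃ + (v₁ + v₂ - v₃) + v₅)) := by
    intro m hm
    rw [pairing_smul_right]
    have := H m hm
    linarith
  have hx₀hull := hhull _ hx₀mem
  rw [Finset.convexHull_eq] at hx₀hull
  obtain ⟨wt, hwt0, hwt1, hwtc⟩ := hx₀hull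
  have hxsum : ∑ y ∈ S, wt y • y = (2⁻¹:ℝ) • (v₁ + v₃ + (v₁ + v₂ - v₃) + v₅) := by
    rw [← hwtc, Finset.centerMass_eq_of_sum_1 S id hwt1]
    rfl
  -- tight functionals are tight on every point in the support
  have tight : ∀ m ∈ Sd, pairing m ((2⁻¹:ℝ) • (v₁ + v₃ + (v₁ + v₂ - v₃) + v₅)) = -1 →
      ∀ y ∈ S, wt y ≠ 0 → pairing m y = -1 := by
    intro m hm hmx y hyS hwy
    have hle : ∀ z ∈ S, wt z * (-1) ≤ wt z * pairing m z :=
      fun z hz => mul_le_mul_of_nonneg_left (hS z hz m hm) (hwt0 z hz)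
    have hsums : ∑ z ∈ S, wt z * (-1) = ∑ z ∈ S, wt z * pairing m z := by
      rw [← Finset.sum_mul, hwt1, ← pairing_finsum m S wt, hxsum, hmx]
      ring
    have heq := (Finset.sum_eq_sum_iff_of_le hle).mp hsums y hyS
    have := mul_left_cancel₀ hwy heq.symm
    linarith [this]
  have hmax₀ : pairing ma ((2⁻¹:ℝ) • (v₁ + v₃ + (v₁ + v₂ - v₃) + v₅)) = -1 := by
    rw [pairing_smul_right, eP ma, pa1, pa2, pa5]; norm_num
  have hmbx₀ : pairing mb ((2⁻¹:ℝ) • (v₁ + v₃ + (v₁ + v₂ - v₃) + v₅)) = -1 := by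
    rw [pairing_smul_right, eP mb, pb1, pb2, pb5]; norm_num
  -- the basis given by v₁,v₂,v₃,v₅
  obtain ⟨bb, hbbcoe⟩ : ∃ bb : Module.Basis (Fin 4) ℝ (Fin 4 → ℝ), ⇑bb = ![v₁,v₂,v₃,v₅] :=
    ⟨basisOfLinearIndependentOfCardEqFinrank hli (by simp [Module.finrank_pi]),
      coe_basisOfLinearIndependentOfCardEqFinrank hli _⟩
  have hbb : ∀ i, bb i = ![v₁,v₂,v₃,v₅] i := fun i => congrFun hbbcoe i
  have hbb0 : bb 0 = v₁ := hbb 0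
  have hbb1 : bb 1 = v₂ := hbb 1
  have hbb2 : bb 2 = v₃ := hbb 2
  have hbb3 : bb 3 = v₅ := hbb 3
  have hyeq : ∀ y : Fin 4 → ℝ,
      y = bb.repr y 0 • v₁ + bb.repr y 1 • v₂ + bb.repr y 2 • v₃ + bb.repr y 3 • v₅ := by
    intro y
    have h := (Module.Basis.sum_repr bb y).symm
    rw [Fin.sum_univ_four, hbb0, hbb1, hbb2, hbb3] at h
    exact h
  -- coordinates of support points
  have hkey : ∀ y ∈ S, wt y ≠ 0 → bb.repr y 2 = 0 ∧ bb.repr y 1 + bb.repr y 3 = 1 := by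
    intro y hyS hwy
    have hma_y : pairing ma y = -1 := tight ma hmaS hmax₀ y hyS hwy
    have hmb_y : pairing mb y = -1 := tight mb hmbS hmbx₀ y hyS hwy
    have hca := pairing_comb ma (bb.repr y 0) (bb.repr y 1) (bb.repr y 2) (bb.repr y 3) v₁ v₂ v₃ v₅
    rw [← hyeq y, pa1, pa2, pa3, pa5, hma_y] at hca
    have hcb := pairing_comb mb (bb.repr y 0) (bb.repr y 1) (bb.repr y 2) (bb.repr y 3) v₁ v₂ v₃ v₅
    rw [← hyeq y, pb1, pb2, pb3, pb5, hmb_y] at hcb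
    have ea : bb.repr y 0 * 0 + bb.repr y 1 * (-1) + bb.repr y 2 * (-1) + bb.repr y 3 * (-1)
        = -(bb.repr y 1 + bb.repr y 2 + bb.repr y 3) := by ring
    have eb : bb.repr y 0 * 0 + bb.repr y 1 * (-1) + bb.repr y 2 * 0 + bb.repr y 3 * (-1)
        = -(bb.repr y 1 + bb.repr y 3) := by ring
    rw [ea] at hca
    rw [eb] at hcb
    constructor <;> linarith only [hca, hcb]
  have hneg : ∀ y ∈ S, wt y ≠ 0 → bb.repr y 0 ≤ 0 := by
    intro y hyS hwy
    obtain ⟨hg2, hg13⟩ := hkey y hyS hwy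
    by_contra hpos
    push_neg at hpos
    rcases lt_or_ge (bb.repr y 1) 0 with hneg1 | hge1
    · -- second coordinate negative : use mp
      have hy := hS y hyS mp hmpS
      have hcd := pairing_comb mp (bb.repr y 0) (bb.repr y 1) (bb.repr y 2) (bb.repr y 3) v₁ v₂ v₃ v₅
      rw [← hyeq y, pd1, pd5, hg2] at hcd
      have hprod : bb.repr y 1 * pairing mp v₂ ≤ bb.repr y 1 := by
        have := mul_le_mul_of_nonpos_right pd2 hneg1.le
        rw [one_mul] at this
        linarith only [this, mul_comm (pairing mp v₂) (bb.repr y 1)]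
      have ecd : bb.repr y 0 * (-1) + bb.repr y 1 * pairing mp v₂ + 0 * pairing mp v₃
            + bb.repr y 3 * (-1)
          = -(bb.repr y 0) + bb.repr y 1 * pairing mp v₂ - bb.repr y 3 := by ring
      rw [hcd, ecd] at hy
      linarith only [hy, hprod, hg13, hpos, hneg1]
    · rcases le_or_gt (bb.repr y 1) 1 with hle1 | hgt1
      · -- the point lies in the cone : contradiction with the cone condition
        have hyc := hcone y (hSlat hyS) (hS y hyS) ![bb.repr y 0, bb.repr y 1, 0, bb.repr y 3]
          (by
            intro i; fin_cases i
            · exact hpos.le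
            · exact hge1
            · exact le_refl 0
            · show (0:ℝ) ≤ bb.repr y 3
              linarith)
          (by
            show y = bb.repr y 0 • v₁ + bb.repr y 1 • v₂ + (0:ℝ) • v₃ + bb.repr y 3 • v₅
            rw [← hg2]
            exact hyeq y)
        rcases hyc with h|h|h|h|h
        · have : bb.repr y 0 = 0 := by rw [h]; simp
          linarith
        · have h1' : bb.repr y 1 = 0 := by
            rw [h, ← hbb0, Module.Basis.repr_self_apply]; simp
          have h3' : bb.repr y 3 = 0 := by
            rw [h, ← hbb0, Module.Basis.repr_self_apply]; simp
          linarith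
        · have : bb.repr y 0 = 0 := by
            rw [h, ← hbb1, Module.Basis.repr_self_apply]; simp
          linarith
        · have : bb.repr y 2 = 1 := by
            rw [h, ← hbb2, Module.Basis.repr_self_apply]; simp
          linarith
        · have : bb.repr y 0 = 0 := by
            rw [h, ← hbb3, Module.Basis.repr_self_apply]; simp
          linarith
      · -- second coordinate > 1 : use ms
        have hy := hS y hyS ms hmsS
        have hcc := pairing_comb ms (bb.repr y 0) (bb.repr y 1) (bb.repr y 2) (bb.repr y 3) v₁ v₂ v₃ v₅
        rw [← hyeq y, pc1, pc2, pc3, hg2] at hcc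
        have hprod : bb.repr y 3 * pairing ms v₅ ≤ bb.repr y 3 := by
          have := mul_le_mul_of_nonpos_right pc5 (by linarith only [hg13, hgt1] : bb.repr y 3 ≤ 0)
          rw [one_mul] at this
          linarith only [this, mul_comm (pairing ms v₅) (bb.repr y 3)]
        have ecc : bb.repr y 0 * (-1) + bb.repr y 1 * (-1) + 0 * (-1)
              + bb.repr y 3 * pairing ms v₅
            = -(bb.repr y 0) - bb.repr y 1 + bb.repr y 3 * pairing ms v₅ := by ring
        rw [hcc, ecc] at hy
        linarith only [hy, hprod, hg13, hpos, hgt1]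
  -- final contradiction via the first coordinate
  have hrepr0 : bb.repr ((2⁻¹:ℝ) • (v₁ + v₃ + (v₁ + v₂ - v₃) + v₅)) 0 = 1 := by
    have hx0e : (2⁻¹:ℝ) • (v₁ + v₃ + (v₁ + v₂ - v₃) + v₅)
        = ∑ i, (![1, 2⁻¹, 0, 2⁻¹] : Fin 4 → ℝ) i • bb i := by
      rw [Fin.sum_univ_four, hbb0, hbb1, hbb2, hbb3]
      show _ = (1:ℝ) • v₁ + (2⁻¹:ℝ) • v₂ + (0:ℝ) • v₃ + (2⁻¹:ℝ) • v₅
      module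
    rw [hx0e, Module.Basis.repr_sum_self]
    rfl
  have hdecomp : bb.repr ((2⁻¹:ℝ) • (v₁ + v₃ + (v₁ + v₂ - v₃) + v₅)) 0
      = ∑ y ∈ S, wt y * bb.repr y 0 := by
    calc bb.repr ((2⁻¹:ℝ) • (v₁ + v₃ + (v₁ + v₂ - v₃) + v₅)) 0
        = bb.coord 0 ((2⁻¹:ℝ) • (v₁ + v₃ + (v₁ + v₂ - v₃) + v₅)) := (Module.Basis.coord_apply bb 0 _).symm
      _ = bb.coord 0 (∑ y ∈ S, wt y • y) := by rw [hxsum]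
      _ = ∑ y ∈ S, wt y * bb.coord 0 y := by
          rw [map_sum]
          exact Finset.sum_congr rfl fun y _ => by rw [map_smul, smul_eq_mul]
      _ = ∑ y ∈ S, wt y * bb.repr y 0 :=
          Finset.sum_congr rfl fun y _ => by rw [Module.Basis.coord_apply]
  have hle0 : ∑ y ∈ S, wt y * bb.repr y 0 ≤ 0 :=
    Finset.sum_nonpos fun y hy => by
      rcases eq_or_ne (wt y) 0 with h|h
      · simp [h]
      · exact mul_nonpos_iff.mpr (Or.inl ⟨hwt0 y hy, hneg y hy h⟩)
  rw [hrepr0] at hdecomp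
  linarith [hdecomp, hle0]

end WallCrossAux

open WallCrossAux

/-- Wall crossing with a four-element circuit preserves good maximal
cones: if `w₁+w₂ = w₃+w₄`, `{w₁,w₂,w₃,w₅}` is linearly independent, the two cones
`Cone(w₁,w₂,w₃,w₅)` and `Cone(w₁,w₂,w₄,w₅)` meet `Δ ∩ ℤ⁴` only in `0` and their
generators, and both `w₁+w₂+w₃+w₅` and `w₁+w₂+w₄+w₅` lie in `3·∂Δ ∪ 4·∂Δ`, then
`w₁+w₃+w₄+w₅` and `w₂+w₃+w₄+w₅` also lie in `3·∂Δ ∪ 4·∂Δ`. -/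
theorem wall_crossing_four_element_circuit
    (Δ : Set (Fin 4 → ℝ)) (hΔ : IsReflexive Δ)
    (w₁ w₂ w₃ w₄ w₅ : Fin 4 → ℝ)
    (hwΔ : ∀ w ∈ ({w₁, w₂, w₃, w₄, w₅} : Set (Fin 4 → ℝ)), w ∈ Δ)
    (hwL : ∀ w ∈ ({w₁, w₂, w₃, w₄, w₅} : Set (Fin 4 → ℝ)), IsLatticePt w)
    (hsum : w₁ + w₂ = w₃ + w₄)
    (hli : LinearIndependent ℝ ![w₁, w₂, w₃, w₅])
    (hc1 : coneOf ![w₁, w₂, w₃, w₅] ∩ Δ ∩ latticePts 4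
      = ({0, w₁, w₂, w₃, w₅} : Set (Fin 4 → ℝ)))
    (hc2 : coneOf ![w₁, w₂, w₄, w₅] ∩ Δ ∩ latticePts 4
      = ({0, w₁, w₂, w₄, w₅} : Set (Fin 4 → ℝ)))
    (h1 : w₁ + w₂ + w₃ + w₅ ∈ bdry 3 Δ ∪ bdry 4 Δ)
    (h2 : w₁ + w₂ + w₄ + w₅ ∈ bdry 3 Δ ∪ bdry 4 Δ) :
    w₁ + w₃ + w₄ + w₅ ∈ bdry 3 Δ ∪ bdry 4 Δ ∧
    w₂ + w₃ + w₄ + w₅ ∈ bdry 3 Δ ∪ bdry 4 Δ := by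
  classical
  obtain ⟨Sd, hSdlat, hdesc⟩ := dual_desc Δ hΔ
  obtain ⟨⟨S, hSlat, hSΔ⟩, h0i, hdual⟩ := hΔ
  have hw1Δ : w₁ ∈ Δ := hwΔ w₁ (by simp)
  have hw2Δ : w₂ ∈ Δ := hwΔ w₂ (by simp)
  have hw3Δ : w₃ ∈ Δ := hwΔ w₃ (by simp)
  have hw4Δ : w₄ ∈ Δ := hwΔ w₄ (by simp)
  have hw5Δ : w₅ ∈ Δ := hwΔ w₅ (by simp)
  have hl1 : IsLatticePt w₁ := hwL w₁ (by simp)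
  have hl2 : IsLatticePt w₂ := hwL w₂ (by simp)
  have hl3 : IsLatticePt w₃ := hwL w₃ (by simp)
  have hl4 : IsLatticePt w₄ := hwL w₄ (by simp)
  have hl5 : IsLatticePt w₅ := hwL w₅ (by simp)
  have hw4eq : w₄ = w₁ + w₂ - w₃ := by
    rw [eq_sub_iff_add_eq, add_comm w₄ w₃]; exact hsum.symm
  have hw3eq : w₃ = w₁ + w₂ - w₄ := by
    rw [eq_sub_iff_add_eq]; exact hsum.symm
  have hm1 : ∀ m ∈ Sd, -1 ≤ pairing m w₁ := (hdesc w₁).mp hw1Δ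
  have hm2 : ∀ m ∈ Sd, -1 ≤ pairing m w₂ := (hdesc w₂).mp hw2Δ
  have hm3 : ∀ m ∈ Sd, -1 ≤ pairing m w₃ := (hdesc w₃).mp hw3Δ
  have hm4 : ∀ m ∈ Sd, -1 ≤ pairing m w₄ := (hdesc w₄).mp hw4Δ
  have hm5 : ∀ m ∈ Sd, -1 ≤ pairing m w₅ := (hdesc w₅).mp hw5Δ
  have hm4' : ∀ m ∈ Sd, -1 ≤ pairing m (w₁ + w₂ - w₃) := by rw [← hw4eq]; exact hm4
  have hm4'' : ∀ m ∈ Sd, -1 ≤ pairing m (w₂ + w₁ - w₃) := by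
    rw [add_comm w₂ w₁, ← hw4eq]; exact hm4
  have hl4' : IsLatticePt (w₁ + w₂ - w₃) := by rw [← hw4eq]; exact hl4
  have hl4'' : IsLatticePt (w₂ + w₁ - w₃) := by rw [add_comm w₂ w₁, ← hw4eq]; exact hl4
  have hli2 : LinearIndependent ℝ ![w₂, w₁, w₃, w₅] := by
    have hcomp : ![w₂, w₁, w₃, w₅] = ![w₁, w₂, w₃, w₅] ∘ (Equiv.swap (0 : Fin 4) 1) := by
      funext i; fin_cases i <;> simp [Equiv.swap_apply_def]
    rw [hcomp]
    exact hli.comp _ (Equiv.injective _)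
  have hSsub : ∀ y ∈ S, ∀ m ∈ Sd, -1 ≤ pairing m y := by
    intro y hy
    have hyΔ : y ∈ Δ := by rw [hSΔ]; exact subset_convexHull ℝ _ hy
    exact (hdesc y).mp hyΔ
  have hhull : ∀ x : Fin 4 → ℝ, (∀ m ∈ Sd, -1 ≤ pairing m x) →
      x ∈ convexHull ℝ (↑S : Set (Fin 4 → ℝ)) := by
    intro x hx
    have := (hdesc x).mpr hx
    rwa [hSΔ] at this
  have hcone1 : ∀ x : Fin 4 → ℝ, IsLatticePt x → (∀ m ∈ Sd, -1 ≤ pairing m x) →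
      ∀ r : Fin 4 → ℝ, (∀ i, 0 ≤ r i) → x = r 0 • w₁ + r 1 • w₂ + r 2 • w₃ + r 3 • w₅ →
      (x = 0 ∨ x = w₁ ∨ x = w₂ ∨ x = w₃ ∨ x = w₅) := by
    intro x hxl hxm r hr hxe
    have hxc : x ∈ coneOf ![w₁, w₂, w₃, w₅] :=
      ⟨r, hr, by rw [Fin.sum_univ_four]; exact hxe⟩
    have hxs : x ∈ ({0, w₁, w₂, w₃, w₅} : Set (Fin 4 → ℝ)) := by
      rw [← hc1]; exact ⟨⟨hxc, (hdesc x).mpr hxm⟩, hxl⟩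
    simpa [Set.mem_insert_iff] using hxs
  have hcone1' : ∀ x : Fin 4 → ℝ, IsLatticePt x → (∀ m ∈ Sd, -1 ≤ pairing m x) →
      ∀ r : Fin 4 → ℝ, (∀ i, 0 ≤ r i) → x = r 0 • w₂ + r 1 • w₁ + r 2 • w₃ + r 3 • w₅ →
      (x = 0 ∨ x = w₂ ∨ x = w₁ ∨ x = w₃ ∨ x = w₅) := by
    intro x hxl hxm r hr hxe
    have h5 := hcone1 x hxl hxm ![r 1, r 0, r 2, r 3]
      (by intro i; fin_cases i
          · exact hr 1
          · exact hr 0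
          · exact hr 2
          · exact hr 3)
      (by show x = r 1 • w₁ + r 0 • w₂ + r 2 • w₃ + r 3 • w₅
          rw [hxe]; module)
    tauto
  have hfr3 := frontier_desc Δ Sd hdesc (show (0:ℝ) < 3 by norm_num)
  have hfr4 := frontier_desc Δ Sd hdesc (show (0:ℝ) < 4 by norm_num)
  -- expansions
  have eS : ∀ m : Fin 4 → ℝ, pairing m (w₁ + w₂ + w₃ + w₅)
      = pairing m w₁ + pairing m w₂ + pairing m w₃ + pairing m w₅ := by
    intro m; simp only [pairing_add_right]
  have eT : ∀ m : Fin 4 → ℝ, pairing m (w₁ + w₂ + w₄ + w₅)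
      = pairing m w₁ + pairing m w₂ + pairing m w₄ + pairing m w₅ := by
    intro m; simp only [pairing_add_right]
  have ePP : ∀ m : Fin 4 → ℝ, pairing m (w₁ + w₃ + w₄ + w₅)
      = pairing m w₁ + pairing m w₃ + pairing m w₄ + pairing m w₅ := by
    intro m; simp only [pairing_add_right]
  have eQQ : ∀ m : Fin 4 → ℝ, pairing m (w₂ + w₃ + w₄ + w₅)
      = pairing m w₂ + pairing m w₃ + pairing m w₄ + pairing m w₅ := by
    intro m; simp only [pairing_add_right]
  have hP4 : ∀ m ∈ Sd, -(4:ℝ) ≤ pairing m (w₁ + w₃ + w₄ + w₅) := by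
    intro m hm
    rw [ePP m]
    linarith [hm1 m hm, hm3 m hm, hm4 m hm, hm5 m hm]
  have hQ4 : ∀ m ∈ Sd, -(4:ℝ) ≤ pairing m (w₂ + w₃ + w₄ + w₅) := by
    intro m hm
    rw [eQQ m]
    linarith [hm2 m hm, hm3 m hm, hm4 m hm, hm5 m hm]
  have hlatP : IsLatticePt (w₁ + w₃ + w₄ + w₅) :=
    lat_add (lat_add (lat_add hl1 hl3) hl4) hl5
  have hlatQ : IsLatticePt (w₂ + w₃ + w₄ + w₅) :=
    lat_add (lat_add (lat_add hl2 hl3) hl4) hl5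
  -- how to conclude membership for a target point
  have conclude : ∀ x : Fin 4 → ℝ, IsLatticePt x →
      (∀ m ∈ Sd, -(4:ℝ) ≤ pairing m x) → (∃ m ∈ Sd, pairing m x ≤ -3) →
      x ∈ bdry 3 Δ ∪ bdry 4 Δ := by
    rintro x hxl h4 ⟨m, hm, hle⟩
    by_cases hall : ∀ m' ∈ Sd, -(3:ℝ) ≤ pairing m' x
    · exact Or.inl ((hfr3 x).mpr ⟨hall, m, hm, le_antisymm hle (hall m hm)⟩)
    · push_neg at hall
      obtain ⟨m', hm', hlt⟩ := hall
      obtain ⟨z, hz⟩ := pairing_int (hSdlat hm') hxl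
      have i1 : z < -3 := by exact_mod_cast hz ▸ hlt
      have i2 : -4 ≤ z := by exact_mod_cast hz ▸ h4 m' hm'
      have hz4 : pairing m' x = -(4:ℝ) := by
        rw [hz]
        exact_mod_cast congrArg (Int.cast : ℤ → ℝ) (by omega : z = -4)
      exact Or.inr ((hfr4 x).mpr ⟨h4, m', hm', hz4⟩)
  -- case analysis on h1, h2
  have hsplit1 : (∀ m ∈ Sd, -(3:ℝ) ≤ pairing m (w₁ + w₂ + w₃ + w₅)) ∧
      (∃ m ∈ Sd, pairing m (w₁ + w₂ + w₃ + w₅) = -(3:ℝ)) ∨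
      (∃ m ∈ Sd, pairing m (w₁ + w₂ + w₃ + w₅) = -(4:ℝ)) := by
    rcases h1 with h | h
    · exact Or.inl ((hfr3 _).mp h)
    · exact Or.inr ((hfr4 _).mp h).2
  have hsplit2 : (∀ m ∈ Sd, -(3:ℝ) ≤ pairing m (w₁ + w₂ + w₄ + w₅)) ∧
      (∃ m ∈ Sd, pairing m (w₁ + w₂ + w₄ + w₅) = -(3:ℝ)) ∨
      (∃ m ∈ Sd, pairing m (w₁ + w₂ + w₄ + w₅) = -(4:ℝ)) := by
    rcases h2 with h | h
    · exact Or.inl ((hfr3 _).mp h)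
    · exact Or.inr ((hfr4 _).mp h).2
  -- the (-4)-case for s
  rcases hsplit1 with ⟨hs3, hs3e⟩ | ⟨m, hm, hm4v⟩
  swap
  · -- s on the 4-boundary: all five pairings equal -1
    have q1 : pairing m w₁ = -1 := by
      have := eS m; linarith [hm1 m hm, hm2 m hm, hm3 m hm, hm5 m hm, hm4v, eS m]
    have q2 : pairing m w₂ = -1 := by
      linarith [hm1 m hm, hm2 m hm, hm3 m hm, hm5 m hm, hm4v, eS m]
    have q3 : pairing m w₃ = -1 := by
      linarith [hm1 m hm, hm2 m hm, hm3 m hm, hm5 m hm, hm4v, eS m]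
    have q5 : pairing m w₅ = -1 := by
      linarith [hm1 m hm, hm2 m hm, hm3 m hm, hm5 m hm, hm4v, eS m]
    have q4 : pairing m w₄ = -1 := by
      rw [hw4eq, pairing_sub_right, pairing_add_right, q1, q2, q3]; norm_num
    constructor
    · exact Or.inr ((hfr4 _).mpr ⟨hP4, m, hm, by rw [ePP m, q1, q3, q4, q5]; norm_num⟩)
    · exact Or.inr ((hfr4 _).mpr ⟨hQ4, m, hm, by rw [eQQ m, q2, q3, q4, q5]; norm_num⟩)
  -- the (-4)-case for t
  rcases hsplit2 with ⟨ht3, ht3e⟩ | ⟨m, hm, hm4v⟩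
  swap
  · have q1 : pairing m w₁ = -1 := by
      linarith [hm1 m hm, hm2 m hm, hm4 m hm, hm5 m hm, hm4v, eT m]
    have q2 : pairing m w₂ = -1 := by
      linarith [hm1 m hm, hm2 m hm, hm4 m hm, hm5 m hm, hm4v, eT m]
    have q4 : pairing m w₄ = -1 := by
      linarith [hm1 m hm, hm2 m hm, hm4 m hm, hm5 m hm, hm4v, eT m]
    have q5 : pairing m w₅ = -1 := by
      linarith [hm1 m hm, hm2 m hm, hm4 m hm, hm5 m hm, hm4v, eT m]
    have q3 : pairing m w₃ = -1 := by
      rw [hw3eq, pairing_sub_right, pairing_add_right, q1, q2, q4]; norm_num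
    constructor
    · exact Or.inr ((hfr4 _).mpr ⟨hP4, m, hm, by rw [ePP m, q1, q3, q4, q5]; norm_num⟩)
    · exact Or.inr ((hfr4 _).mpr ⟨hQ4, m, hm, by rw [eQQ m, q2, q3, q4, q5]; norm_num⟩)
  -- main case : both on the 3-boundary
  have ht3e' : ∃ m ∈ Sd, pairing m (w₁ + w₂ + (w₁ + w₂ - w₃) + w₅) = -3 := by
    rw [← hw4eq]; exact ht3e
  have hPle : ∃ m ∈ Sd, pairing m (w₁ + w₃ + w₄ + w₅) ≤ -3 := by
    have := core' Sd hSdlat S hSlat w₁ w₂ w₃ w₅ hl1 hl2 hl3 hl5 hl4' hli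
      hm1 hm2 hm3 hm4' hm5 hSsub hhull hcone1 hs3e ht3e'
    rwa [show w₁ + w₃ + (w₁ + w₂ - w₃) + w₅ = w₁ + w₃ + w₄ + w₅ from by rw [← hw4eq]] at this
  have hs3e'' : ∃ m ∈ Sd, pairing m (w₂ + w₁ + w₃ + w₅) = -3 := by
    rw [add_comm w₂ w₁]; exact hs3e
  have ht3e'' : ∃ m ∈ Sd, pairing m (w₂ + w₁ + (w₂ + w₁ - w₃) + w₅) = -3 := by
    rw [add_comm w₂ w₁, ← hw4eq]; exact ht3e
  have hQle : ∃ m ∈ Sd, pairing m (w₂ + w₃ + w₄ + w₅) ≤ -3 := by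
    have := core' Sd hSdlat S hSlat w₂ w₁ w₃ w₅ hl2 hl1 hl3 hl5 hl4'' hli2
      hm2 hm1 hm3 hm4'' hm5 hSsub hhull hcone1' hs3e'' ht3e''
    rwa [show w₂ + w₃ + (w₂ + w₁ - w₃) + w₅ = w₂ + w₃ + w₄ + w₅ from by
      rw [add_comm w₂ w₁, ← hw4eq]] at this
  exact ⟨conclude _ hlatP hP4 hPle, conclude _ hlatQ hQ4 hQle⟩
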